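/- Let C be the image of a uniformly random linear map G: F_2^k → F_2^m, and let c ≠ c' be two distinct codewords Gu, Gu' with u ≠ u'. Fix index sequences s_1 < ... < s_t and s'_1 < ... < s'_t in [m]. Then the probability that (Gu)_{s_i} = (Gu')_{s'_i} holds for all i ∈ [t] is at most 2^{-t}. -/
import Mathlib

open Matrix

private noncomputable def PhiCGHL (m k t : ℕ) (u u' : Fin k → ZMod 2) (s s' : Fin t → Fin m) :
    Matrix (Fin m) (Fin k) (ZMod 2) →ₗ[ZMod 2] (Fin t → ZMod 2) where
  toFun G := fun i => G.mulVec u (s i) + G.mulVec u' (s' i)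
  map_add' A B := by
    funext i
    simp only [Matrix.add_mulVec, Pi.add_apply]
    ring
  map_smul' c A := by
    funext i
    simp only [Matrix.smul_mulVec, Pi.smul_apply, RingHom.id_apply, smul_eq_mul]
    ring

/-- A linear map to `Fin t → ZMod 2` admitting a "triangular" family is surjective. -/
private lemma surj_of_triangular {t : ℕ} {V : Type*} [AddCommGroup V] [Module (ZMod 2) V]
    (Φ : V →ₗ[ZMod 2] (Fin t → ZMod 2)) (v : Fin t → V)
    (hdiag : ∀ i, Φ (v i) i = 1) (hlt : ∀ i p : Fin t, p < i → Φ (v i) p = 0) :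
    Function.Surjective Φ := by
  classical
  set N : Matrix (Fin t) (Fin t) (ZMod 2) := Matrix.of (fun p i => Φ (v i) p) with hN
  have hNdet : N.det = 1 := by
    rw [Matrix.det_of_lowerTriangular N (by intro i j hij; exact hlt j i hij)]
    exact Finset.prod_eq_one fun i _ => hdiag i
  have hNsurj : Function.Surjective N.mulVec :=
    Matrix.mulVec_surjective_iff_isUnit.mpr
      ((Matrix.isUnit_iff_isUnit_det N).mpr (by rw [hNdet]; exact isUnit_one))
  intro b
  obtain ⟨c, hc⟩ := hNsurj b
  refine ⟨∑ i, c i • v i, ?_⟩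
  funext p
  rw [map_sum]
  have h1 : (∑ i, Φ (c i • v i)) p = ∑ i, c i * Φ (v i) p := by
    rw [Finset.sum_apply]
    refine Finset.sum_congr rfl fun i _ => ?_
    rw [Φ.map_smul]
    rfl
  rw [h1, ← hc]
  simp [Matrix.mulVec, dotProduct, hN, mul_comm]

private lemma phi_surjective (m k t : ℕ) (u u' : Fin k → ZMod 2) (hu : u ≠ u')
    (s s' : Fin t → Fin m) (hs : StrictMono s) (hs' : StrictMono s') :
    Function.Surjective (PhiCGHL m k t u u' s s') := by
  classical
  -- pivot row for each constraint
  set r : Fin t → Fin m := fun i =>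
    if u' = 0 then s i else if u = 0 then s' i else max (s i) (s' i) with hr
  -- pivot coefficient vector
  set a : Fin t → (Fin k → ZMod 2) := fun i =>
    (if r i = s i then u else 0) + (if r i = s' i then u' else 0) with ha
  have haddne : u + u' ≠ 0 := by
    intro h
    apply hu
    funext q
    have hq := congrFun h q
    simp only [Pi.add_apply, Pi.zero_apply] at hq
    revert hq
    generalize u q = x; generalize u' q = y
    revert x y; decide
  have hane : ∀ i, a i ≠ 0 := by
    intro i
    simp only [ha, hr]
    by_cases h1 : u' = 0
    · have hu0 : u ≠ 0 := by simpa [h1] using hu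
      simp only [if_pos h1, if_pos rfl]
      by_cases h2 : s i = s' i <;> simp [h2, h1, hu0]
    · by_cases h2 : u = 0
      · simp only [if_neg h1, if_pos h2, if_pos rfl]
        by_cases h3 : s' i = s i <;> simp [h3, h2, h1]
      · simp only [if_neg h1, if_neg h2]
        rcases lt_trichotomy (s i) (s' i) with h3 | h3 | h3
        · rw [max_eq_right h3.le, if_neg h3.ne', if_pos rfl]
          simpa using h1
        · rw [h3, max_self, if_pos rfl, if_pos rfl]
          exact haddne
        · rw [max_eq_left h3.le, if_pos rfl, if_neg h3.ne']
          simpa using h2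
  have hex : ∀ i, ∃ q, a i q = 1 := by
    intro i
    obtain ⟨q, hq0⟩ := Function.ne_iff.mp (hane i)
    simp only [Pi.zero_apply] at hq0
    refine ⟨q, ?_⟩
    revert hq0
    generalize a i q = x
    revert x; decide
  choose j hj using hex
  set v : Fin t → Matrix (Fin m) (Fin k) (ZMod 2) :=
    fun i => Matrix.single (r i) (j i) 1 with hv
  have hmv : ∀ (p0 : Fin m) (q0 : Fin k) (x : Fin k → ZMod 2) (y : Fin m),
      (Matrix.single p0 q0 (1 : ZMod 2)).mulVec x y =
        if p0 = y then x q0 else 0 := by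
    intro p0 q0 x y
    simp only [Matrix.mulVec, dotProduct, Matrix.single, Matrix.of_apply, ite_and]
    rcases eq_or_ne p0 y with h | h
    · simp [h, ite_mul, Finset.sum_ite_eq]
    · simp [h]
  have hPhiv : ∀ i p, PhiCGHL m k t u u' s s' (v i) p =
      (if r i = s p then u (j i) else 0) + (if r i = s' p then u' (j i) else 0) := by
    intro i p
    show (v i).mulVec u (s p) + (v i).mulVec u' (s' p) = _
    rw [hv]
    simp only [hmv]
  have hdiag : ∀ i, PhiCGHL m k t u u' s s' (v i) i = 1 := by
    intro i
    have h2 := hj i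
    simp only [ha, Pi.add_apply, apply_ite (fun f : Fin k → ZMod 2 => f (j i)),
      Pi.zero_apply] at h2
    rw [hPhiv]
    exact h2
  have hlt : ∀ i p : Fin t, p < i → PhiCGHL m k t u u' s s' (v i) p = 0 := by
    intro i p hpi
    rw [hPhiv]
    have hsp : s p < s i := hs hpi
    have hsp' : s' p < s' i := hs' hpi
    by_cases h1 : u' = 0
    · have hri : r i = s i := by simp only [hr]; rw [if_pos h1]
      rw [hri, if_neg (fun hh : s i = s p => hsp.ne' hh), h1]
      simp
    · by_cases h2 : u = 0
      · have hri : r i = s' i := by simp only [hr]; rw [if_neg h1, if_pos h2]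
        rw [hri, if_neg (fun hh : s' i = s' p => hsp'.ne' hh), h2]
        simp
      · have hri : r i = max (s i) (s' i) := by simp only [hr]; rw [if_neg h1, if_neg h2]
        rw [hri, if_neg fun hh : max (s i) (s' i) = s p =>
            absurd (hh ▸ le_max_left (s i) (s' i)) (not_le.mpr hsp),
          if_neg fun hh : max (s i) (s' i) = s' p =>
            absurd (hh ▸ le_max_right (s i) (s' i)) (not_le.mpr hsp')]
        simp
  exact surj_of_triangular _ v hdiag hlt

/-- Claim 4.1 of Cheng–Guruswami–Haeupler–Li: for a uniformly random linear map
`G : F_2^k → F_2^m`, fixed distinct messages `u ≠ u'` and fixed increasing index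
sequences `s, s'` of length `t`, the probability (over `G`) that
`(Gu)_{s_i} = (Gu')_{s'_i}` for all `i` is at most `2^{-t}`. -/
theorem prob_agree_on_index_seqs_le (m k t : ℕ) (u u' : Fin k → ZMod 2) (hu : u ≠ u')
    (s s' : Fin t → Fin m) (hs : StrictMono s) (hs' : StrictMono s') :
    (Nat.card {G : Matrix (Fin m) (Fin k) (ZMod 2) //
        ∀ i : Fin t, G.mulVec u (s i) = G.mulVec u' (s' i)} : ℝ) / 2 ^ (m * k) ≤
      ((2 : ℝ))⁻¹ ^ t := by
  classical
  set Φ := PhiCGHL m k t u u' s s' with hΦ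
  have hsurj := phi_surjective m k t u u' hu s s' hs hs'
  have hcardS : Nat.card {G : Matrix (Fin m) (Fin k) (ZMod 2) //
      ∀ i : Fin t, G.mulVec u (s i) = G.mulVec u' (s' i)} = Nat.card (LinearMap.ker Φ) := by
    apply Nat.card_congr
    apply Equiv.subtypeEquivRight
    intro G
    rw [LinearMap.mem_ker]
    constructor
    · intro h
      funext i
      show G.mulVec u (s i) + G.mulVec u' (s' i) = 0
      rw [h i]
      generalize G.mulVec u' (s' i) = x
      revert x; decide
    · intro h i
      have h2 : G.mulVec u (s i) + G.mulVec u' (s' i) = 0 := congrFun h i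
      revert h2
      generalize G.mulVec u (s i) = x; generalize G.mulVec u' (s' i) = y
      revert x y; decide
  have htotal : Nat.card (Matrix (Fin m) (Fin k) (ZMod 2)) = 2 ^ (m * k) := by
    rw [Nat.card_eq_fintype_card]
    rw [show Fintype.card (Matrix (Fin m) (Fin k) (ZMod 2)) =
      Fintype.card (Fin m → Fin k → ZMod 2) from rfl]
    simp [← pow_mul, Nat.mul_comm]
  have hquot : Nat.card (Matrix (Fin m) (Fin k) (ZMod 2) ⧸ LinearMap.ker Φ) = 2 ^ t := by
    rw [Nat.card_congr (LinearMap.quotKerEquivOfSurjective Φ hsurj).toEquiv]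
    simp [Nat.card_eq_fintype_card]
  have key : 2 ^ (m * k) = 2 ^ t * Nat.card (LinearMap.ker Φ) := by
    rw [← htotal, Submodule.card_eq_card_quotient_mul_card (LinearMap.ker Φ), hquot]
    ring
  have keyR : ((2 : ℝ)) ^ (m * k) =
      2 ^ t * (Nat.card {G : Matrix (Fin m) (Fin k) (ZMod 2) //
        ∀ i : Fin t, G.mulVec u (s i) = G.mulVec u' (s' i)} : ℝ) := by
    rw [hcardS]
    exact_mod_cast key
  apply le_of_eq
  have h2t : (2:ℝ) ^ t ≠ 0 := by positivity
  have hmk : (2:ℝ) ^ (m * k) ≠ 0 := by positivity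
  rw [div_eq_iff hmk, inv_pow, inv_mul_eq_div, eq_div_iff h2t]
  linear_combination -keyR
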